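/- For the adaptive stepsize L = (Σ_{i∈J} ω̄_i(a_iᵀx − b_i)²)/‖Σ_{i∈J} ω̄_i(a_iᵀx − b_i)a_i‖² with ω̄_i = ω_i/‖a_i‖², whenever the denominator is nonzero one has L ≥ 1/λ_max(A_Jᵀ diag(ω̄_i, i∈J) A_J). -/

import Mathlib

open Matrix Finset

/-- The largest eigenvalue of a real square matrix. -/
noncomputable def lamMax {n : ℕ} (M : Matrix (Fin n) (Fin n) ℝ) : ℝ :=
  sSup {μ : ℝ | ∃ v : Fin n → ℝ, v ≠ 0 ∧ M.mulVec v = μ • v}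

lemma dot_self_nonneg' {n : ℕ} (v : Fin n → ℝ) : 0 ≤ v ⬝ᵥ v :=
  Finset.sum_nonneg fun _ _ => mul_self_nonneg _

lemma dot_self_pos' {n : ℕ} {v : Fin n → ℝ} (hv : v ≠ 0) : 0 < v ⬝ᵥ v :=
  lt_of_le_of_ne (dot_self_nonneg' v) fun h => hv (dotProduct_self_eq_zero.mp h.symm)

lemma onb_sum_dot {n : ℕ} (u : OrthonormalBasis (Fin n) ℝ (EuclideanSpace ℝ (Fin n)))
    (x y : Fin n → ℝ) :
    x ⬝ᵥ y = ∑ k, ((u k : Fin n → ℝ) ⬝ᵥ x) * ((u k : Fin n → ℝ) ⬝ᵥ y) := by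
  have h := u.sum_inner_mul_inner (WithLp.toLp 2 x : EuclideanSpace ℝ (Fin n)) (WithLp.toLp 2 y : EuclideanSpace ℝ (Fin n))
  rw [show (x ⬝ᵥ y) = inner (𝕜 := ℝ) (E := EuclideanSpace ℝ (Fin n)) (WithLp.toLp 2 x) (WithLp.toLp 2 y) by
    simp [PiLp.inner_apply, dotProduct, mul_comm], ← h]
  refine Finset.sum_congr rfl fun k _ => ?_
  simp only [PiLp.inner_apply, PiLp.toLp_apply, RCLike.inner_apply, conj_trivial, dotProduct]
  rw [show (∑ i, y i * u k i) = ∑ i, u k i * y i from Finset.sum_congr rfl fun i _ => mul_comm _ _]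

lemma sum_dotProduct' {α : Type*} [Fintype α] {k : ℕ} (s : Finset α)
    (f : α → (Fin k → ℝ)) (v : Fin k → ℝ) :
    (∑ i ∈ s, f i) ⬝ᵥ v = ∑ i ∈ s, f i ⬝ᵥ v := by
  simp only [dotProduct, Finset.sum_apply, Finset.sum_mul]
  rw [Finset.sum_comm]

lemma dotProduct_sum' {α : Type*} [Fintype α] {k : ℕ} (s : Finset α)
    (v : Fin k → ℝ) (f : α → (Fin k → ℝ)) :
    v ⬝ᵥ (∑ i ∈ s, f i) = ∑ i ∈ s, v ⬝ᵥ f i := by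
  simp only [dotProduct, Finset.sum_apply, Finset.mul_sum]
  rw [Finset.sum_comm]

lemma sum_mulVec' {α : Type*} [Fintype α] {k : ℕ} (s : Finset α)
    (f : α → Matrix (Fin k) (Fin k) ℝ) (v : Fin k → ℝ) :
    (∑ i ∈ s, f i) *ᵥ v = ∑ i ∈ s, (f i) *ᵥ v := by
  ext j
  simp only [Matrix.mulVec, dotProduct, Finset.sum_apply, Matrix.sum_apply, Finset.sum_mul]
  rw [Finset.sum_comm]

lemma rayleigh_aux {n : ℕ} (hn : 0 < n) (M : Matrix (Fin n) (Fin n) ℝ)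
    (hM : M.IsHermitian) :
    (∀ v : Fin n → ℝ, v ⬝ᵥ M.mulVec v ≤ lamMax M * (v ⬝ᵥ v)) := by
  have : Nonempty (Fin n) := ⟨⟨0, hn⟩⟩
  set u := hM.eigenvectorBasis with hu
  set lam := hM.eigenvalues with hlam
  have expand : ∀ v : Fin n → ℝ,
      v ⬝ᵥ M.mulVec v = ∑ k, lam k * ((u k : Fin n → ℝ) ⬝ᵥ v) ^ 2 := by
    intro v
    rw [onb_sum_dot u v (M.mulVec v)]
    refine Finset.sum_congr rfl fun k _ => ?_
    have hMt : Mᵀ = M := by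
      rw [← Matrix.conjTranspose_eq_transpose_of_trivial, hM.eq]
    have h3 : (u k : Fin n → ℝ) ⬝ᵥ M.mulVec v = (M.mulVec (u k)) ⬝ᵥ v := by
      rw [Matrix.dotProduct_mulVec, ← Matrix.mulVec_transpose, hMt]
    have h4 : M.mulVec (u k) = lam k • (u k : Fin n → ℝ) := hM.mulVec_eigenvectorBasis k
    rw [h3, h4, smul_dotProduct, smul_eq_mul]
    ring
  have normexp : ∀ v : Fin n → ℝ, v ⬝ᵥ v = ∑ k, ((u k : Fin n → ℝ) ⬝ᵥ v) ^ 2 := by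
    intro v
    rw [onb_sum_dot u v v]
    exact Finset.sum_congr rfl fun k _ => (sq _).symm
  obtain ⟨k0, hk0⟩ := Finset.exists_mem_eq_sup' (Finset.univ_nonempty) lam
  set c := Finset.univ.sup' Finset.univ_nonempty lam with hc
  have hlamle : ∀ k, lam k ≤ c := fun k => Finset.le_sup' lam (Finset.mem_univ k)
  have hform : ∀ v : Fin n → ℝ, v ⬝ᵥ M.mulVec v ≤ c * (v ⬝ᵥ v) := by
    intro v
    rw [expand v, normexp v, Finset.mul_sum]
    exact Finset.sum_le_sum fun k _ => mul_le_mul_of_nonneg_right (hlamle k) (sq_nonneg _)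
  have hbdd : BddAbove {μ : ℝ | ∃ v : Fin n → ℝ, v ≠ 0 ∧ M.mulVec v = μ • v} := by
    refine ⟨c, fun μ hμ => ?_⟩
    obtain ⟨v, hv, hvv⟩ := hμ
    have h1 : v ⬝ᵥ M.mulVec v = μ * (v ⬝ᵥ v) := by
      rw [hvv, dotProduct_smul, smul_eq_mul]
    have h2 := hform v
    rw [h1] at h2
    exact le_of_mul_le_mul_right (by linarith) (dot_self_pos' hv)
  have hcle : c ≤ lamMax M := by
    rw [hk0.2]
    exact le_csSup hbdd ⟨u k0, by simpa using u.orthonormal.ne_zero k0, hM.mulVec_eigenvectorBasis k0⟩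
  intro v
  exact (hform v).trans (mul_le_mul_of_nonneg_right hcle (dot_self_nonneg' v))

theorem stmt10 (m n : ℕ) (A : Matrix (Fin m) (Fin n) ℝ) (hrows : ∀ i, A i ≠ 0)
    (J : Finset (Fin m)) (w : Fin m → ℝ) (hw : ∀ i ∈ J, 0 < w i)
    (x : Fin n → ℝ) (b : Fin m → ℝ)
    (hres : ∃ i ∈ J, A i ⬝ᵥ x - b i ≠ 0)
    (hden : (∑ i ∈ J, ((w i / (A i ⬝ᵥ A i)) * (A i ⬝ᵥ x - b i)) • A i) ≠ 0) :
    (lamMax (∑ i ∈ J, (w i / (A i ⬝ᵥ A i)) • vecMulVec (A i) (A i)))⁻¹ ≤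
      (∑ i ∈ J, (w i / (A i ⬝ᵥ A i)) * (A i ⬝ᵥ x - b i) ^ 2) /
        ((∑ i ∈ J, ((w i / (A i ⬝ᵥ A i)) * (A i ⬝ᵥ x - b i)) • A i) ⬝ᵥ
          (∑ i ∈ J, ((w i / (A i ⬝ᵥ A i)) * (A i ⬝ᵥ x - b i)) • A i)) := by
  classical
  set c : Fin m → ℝ := fun i => w i / (A i ⬝ᵥ A i) with hcdef
  set r : Fin m → ℝ := fun i => A i ⬝ᵥ x - b i with hrdef
  set z : Fin n → ℝ := ∑ i ∈ J, (c i * r i) • A i with hzdef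
  set M : Matrix (Fin n) (Fin n) ℝ := ∑ i ∈ J, c i • vecMulVec (A i) (A i) with hMdef
  have hc : ∀ i ∈ J, 0 < c i := fun i hi =>
    div_pos (hw i hi) (dot_self_pos' (hrows i))
  have hn : 0 < n := by
    rcases Nat.eq_zero_or_pos n with h | h
    · subst h
      exact absurd (Subsingleton.elim z 0) hden
    · exact h
  -- denominator
  have hden' : (0:ℝ) < z ⬝ᵥ z := dot_self_pos' hden
  -- M is Hermitian
  have hM : M.IsHermitian := by
    show Mᴴ = M
    ext a b'
    simp only [hMdef, Matrix.conjTranspose_apply, Matrix.sum_apply, Matrix.smul_apply,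
      Matrix.vecMulVec_apply, smul_eq_mul, star_trivial]
    exact Finset.sum_congr rfl fun i _ => by ring
  -- key identities
  have hdot : z ⬝ᵥ z = ∑ i ∈ J, (c i * r i) * (A i ⬝ᵥ z) := by
    rw [hzdef, sum_dotProduct']
    exact Finset.sum_congr rfl fun i _ => by rw [smul_dotProduct, smul_eq_mul]
  have hMz : M.mulVec z = ∑ i ∈ J, (c i * (A i ⬝ᵥ z)) • A i := by
    rw [hMdef, sum_mulVec']
    refine Finset.sum_congr rfl fun i _ => ?_
    rw [Matrix.smul_mulVec]
    ext j
    simp only [Matrix.mulVec, Matrix.vecMulVec_apply, dotProduct, Finset.mul_sum, mul_assoc,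
      Matrix.smul_apply, Pi.smul_apply, smul_eq_mul, Finset.sum_apply]
    rw [Finset.sum_mul]
    exact Finset.sum_congr rfl fun l _ => by ring
  have hq : z ⬝ᵥ M.mulVec z = ∑ i ∈ J, c i * (A i ⬝ᵥ z) ^ 2 := by
    rw [hMz, dotProduct_sum']
    refine Finset.sum_congr rfl fun i _ => ?_
    rw [dotProduct_smul, smul_eq_mul, dotProduct_comm]
    ring
  -- Cauchy-Schwarz
  have hCS : (z ⬝ᵥ z) ^ 2 ≤ (∑ i ∈ J, c i * r i ^ 2) * (z ⬝ᵥ M.mulVec z) := by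
    rw [hdot, hq]
    have h := Finset.sum_mul_sq_le_sq_mul_sq J (fun i => Real.sqrt (c i) * r i)
      (fun i => Real.sqrt (c i) * (A i ⬝ᵥ z))
    have e1 : ∀ i ∈ J, (Real.sqrt (c i) * r i) * (Real.sqrt (c i) * (A i ⬝ᵥ z))
        = (c i * r i) * (A i ⬝ᵥ z) := by
      intro i hi
      rw [show (Real.sqrt (c i) * r i) * (Real.sqrt (c i) * (A i ⬝ᵥ z))
          = (Real.sqrt (c i) * Real.sqrt (c i)) * (r i * (A i ⬝ᵥ z)) by ring,
        Real.mul_self_sqrt (hc i hi).le]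
      ring
    have e2 : ∀ i ∈ J, (Real.sqrt (c i) * r i) ^ 2 = c i * r i ^ 2 := by
      intro i hi
      rw [mul_pow, Real.sq_sqrt (hc i hi).le]
    have e3 : ∀ i ∈ J, (Real.sqrt (c i) * (A i ⬝ᵥ z)) ^ 2 = c i * (A i ⬝ᵥ z) ^ 2 := by
      intro i hi
      rw [mul_pow, Real.sq_sqrt (hc i hi).le]
    rw [Finset.sum_congr rfl e1, Finset.sum_congr rfl e2, Finset.sum_congr rfl e3] at h
    exact h
  -- numerator positive
  have hnum : (0:ℝ) < ∑ i ∈ J, c i * r i ^ 2 := by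
    rcases le_or_gt (∑ i ∈ J, c i * r i ^ 2) 0 with h | h
    · exfalso
      have hqn : z ⬝ᵥ M.mulVec z = ∑ i ∈ J, c i * (A i ⬝ᵥ z) ^ 2 := hq
      have hqnn : 0 ≤ z ⬝ᵥ M.mulVec z := by
        rw [hqn]
        exact Finset.sum_nonneg fun i hi => mul_nonneg (hc i hi).le (sq_nonneg _)
      nlinarith [sq_nonneg (z ⬝ᵥ z)]
    · exact h
  -- quadratic form positive
  have hqpos : (0:ℝ) < z ⬝ᵥ M.mulVec z := by
    nlinarith
  -- Rayleigh bound
  have hray := rayleigh_aux hn M hM z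
  have hLpos : (0:ℝ) < lamMax M := by
    nlinarith
  -- combine: z⬝z ≤ num * lamMax
  have hmain : z ⬝ᵥ z ≤ (∑ i ∈ J, c i * r i ^ 2) * lamMax M := by
    nlinarith
  show (lamMax M)⁻¹ ≤ (∑ i ∈ J, c i * r i ^ 2) / (z ⬝ᵥ z)
  rw [le_div_iff₀ hden', inv_mul_le_iff₀ hLpos]
  nlinarith [hmain]
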